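/- Suppose X is a Poisson set for J: for every continuous f : B_X → ℝ there exists a continuous h : X → ℝ with both h ∈ SH(J) and −h ∈ SH(J) (h is J-harmonic) such that h = f on B_X. Then for every z ∈ X the set J_z^b = {μ ∈ J_z : supp μ ⊆ B_X} contains at most one measure. (Implication (1) ⇒ (2) of the paper's theorem on the Dirichlet problem for m-harmonic functions.) -/

import Mathlib

open MeasureTheory Topology Metric Set ENNReal

noncomputable instance (n : ℕ) : MeasurableSpace (EuclideanSpace ℂ (Fin n)) := borel _
instance (n : ℕ) : BorelSpace (EuclideanSpace ℂ (Fin n)) := ⟨rfl⟩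

/-- The positive part of an extended real number, as an element of `ℝ≥0∞`. -/
noncomputable def EReal.toENNReal' (x : EReal) : ℝ≥0∞ :=
  if x = ⊤ then ⊤ else ENNReal.ofReal x.toReal

/-- The integral of an `EReal`-valued function: the integral of its positive part minus the
integral of its negative part (computed in `EReal`). -/
noncomputable def eint {α : Type*} [MeasurableSpace α] (μ : Measure α) (u : α → EReal) : EReal :=
  ((∫⁻ x, (u x).toENNReal' ∂μ : ℝ≥0∞) : EReal) - ((∫⁻ x, (-u x).toENNReal' ∂μ : ℝ≥0∞) : EReal)

/-- The (closed) support of a measure: points all of whose open neighbourhoods have positive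
measure. -/
def msupp {α : Type*} [TopologicalSpace α] [MeasurableSpace α] (μ : Measure α) : Set α :=
  {x | ∀ U : Set α, IsOpen U → x ∈ U → 0 < μ U}

/-- The class `SH(J)`: upper semicontinuous functions with values in `[-∞, ∞)` satisfying the
sub-mean value inequality with respect to every measure in every `J z`. -/
def IsSH {α : Type*} [TopologicalSpace α] [MeasurableSpace α]
    (J : α → Set (Measure α)) (u : α → EReal) : Prop :=
  UpperSemicontinuous u ∧ (∀ z, u z ≠ ⊤) ∧ ∀ z, ∀ μ ∈ J z, u z ≤ eint μ u

/-- Continuous real-valued members of `SH(J)`. -/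
def IsSHR {α : Type*} [TopologicalSpace α] [MeasurableSpace α]
    (J : α → Set (Measure α)) (u : α → ℝ) : Prop :=
  Continuous u ∧ IsSH J (fun x => (u x : EReal))

/-- The Choquet boundary: points whose only Jensen measure is the Dirac measure. -/
def choquet {α : Type*} [TopologicalSpace α] [MeasurableSpace α]
    (J : α → Set (Measure α)) : Set α := {z | J z = {Measure.dirac z}}

/-- `z` is a peak point: there is `u ∈ SH(J)` with `u z = 0` and `u < 0` elsewhere. -/
def IsPeakPt {α : Type*} [TopologicalSpace α] [MeasurableSpace α]
    (J : α → Set (Measure α)) (z : α) : Prop :=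
  ∃ u : α → EReal, IsSH J u ∧ u z = 0 ∧ ∀ w, w ≠ z → u w < 0

/-- The harmonic measure `ω(z, E, X)`. -/
noncomputable def hm {α : Type*} [TopologicalSpace α] [MeasurableSpace α]
    (J : α → Set (Measure α)) (z : α) (E : Set α) : ℝ≥0∞ :=
  ⨅ (V : Set α) (_ : IsOpen V) (_ : E ⊆ V), ⨆ μ ∈ J z, μ V

lemma eint_coe_eq_integral {α : Type*} [MeasurableSpace α] (μ : Measure α)
    (g : α → ℝ) (hg : Integrable g μ) :
    eint μ (fun x => (g x : EReal)) = ((∫ x, g x ∂μ : ℝ) : EReal) := by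
  have h1 : (fun x => ((g x : EReal)).toENNReal') = fun x => ENNReal.ofReal (g x) := by
    funext x
    simp [EReal.toENNReal', EReal.toReal_coe]
  have h2 : (fun x => (-(g x : EReal)).toENNReal') = fun x => ENNReal.ofReal (-g x) := by
    funext x
    rw [← EReal.coe_neg]
    simp [EReal.toENNReal', EReal.toReal_coe]
  have hA : (∫⁻ x, ENNReal.ofReal (g x) ∂μ) ≠ ⊤ := by
    refine ne_top_of_le_ne_top hg.hasFiniteIntegral.ne ?_
    refine lintegral_mono fun x => ?_
    rw [← ofReal_norm]
    exact ENNReal.ofReal_le_ofReal (le_abs_self _)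
  have hB : (∫⁻ x, ENNReal.ofReal (-g x) ∂μ) ≠ ⊤ := by
    refine ne_top_of_le_ne_top hg.hasFiniteIntegral.ne ?_
    refine lintegral_mono fun x => ?_
    rw [← ofReal_norm]
    exact ENNReal.ofReal_le_ofReal (neg_le_abs _)
  rw [eint, h1, h2, integral_eq_lintegral_pos_part_sub_lintegral_neg_part hg,
    EReal.coe_sub]
  congr 1
  · rw [← ENNReal.ofReal_toReal hA, EReal.coe_ennreal_ofReal,
      max_eq_left ENNReal.toReal_nonneg, ENNReal.toReal_ofReal ENNReal.toReal_nonneg]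
  · rw [← ENNReal.ofReal_toReal hB, EReal.coe_ennreal_ofReal,
      max_eq_left ENNReal.toReal_nonneg, ENNReal.toReal_ofReal ENNReal.toReal_nonneg]

theorem boundary_jensen_unique_of_poisson {n : ℕ} (X : Set (EuclideanSpace ℂ (Fin n)))
    (hXc : IsCompact X) (hXne : X.Nonempty)
    (J : ∀ _ : ↑X, Set (Measure ↑X))
    (hprob : ∀ z : ↑X, ∀ μ ∈ J z, IsProbabilityMeasure μ)
    (hdirac : ∀ z : ↑X, Measure.dirac z ∈ J z)
    (hPoisson : ∀ f : ↑X → ℝ, ContinuousOn f (closure (choquet J)) →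
      ∃ h : ↑X → ℝ, IsSHR J h ∧ IsSHR J (fun x => -h x) ∧ EqOn h f (closure (choquet J))) :
    ∀ z : ↑X, ∀ μ ∈ J z, ∀ ν ∈ J z,
      msupp μ ⊆ closure (choquet J) → msupp ν ⊆ closure (choquet J) → μ = ν := by
  haveI : CompactSpace ↑X := isCompact_iff_compactSpace.mp hXc
  intro z μ hμ ν hν hμs hνs
  haveI := hprob z μ hμ
  haveI := hprob z ν hν
  -- a measure supported in B gives zero mass to the complement of B
  have hnull : ∀ (m : Measure ↑X), msupp m ⊆ closure (choquet J) →
      m (closure (choquet J))ᶜ = 0 := by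
    intro m hm
    refine measure_null_of_locally_null _ fun x hx => ?_
    have hxn : x ∉ msupp m := fun h => hx (hm h)
    simp only [msupp, Set.mem_setOf_eq, not_forall] at hxn
    obtain ⟨U, hUo, hxU, hU0⟩ := hxn
    have : m U = 0 := by
      by_contra h
      exact hU0 (pos_iff_ne_zero.mpr h)
    exact ⟨U, mem_nhdsWithin_of_mem_nhds (hUo.mem_nhds hxU), this⟩
  -- harmonic functions have the mean-value property
  have hmean : ∀ (h : ↑X → ℝ), IsSHR J h → IsSHR J (fun x => -h x) →
      ∀ (m : Measure ↑X), m ∈ J z → IsProbabilityMeasure m → ∫ x, h x ∂m = h z := by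
    intro h hh hnh m hmJ hmp
    have hcont := hh.1
    have hint : Integrable h m :=
      hcont.integrable_of_hasCompactSupport (HasCompactSupport.of_compactSpace h)
    have h1 := hh.2.2.2 z m hmJ
    have h2 := hnh.2.2.2 z m hmJ
    rw [eint_coe_eq_integral m h hint] at h1
    rw [eint_coe_eq_integral m (fun x => -h x) hint.neg] at h2
    rw [integral_neg] at h2
    have e1 : h z ≤ ∫ x, h x ∂m := EReal.coe_le_coe_iff.mp h1
    have e2 : -h z ≤ -∫ x, h x ∂m := EReal.coe_le_coe_iff.mp h2
    linarith
  -- equality of measures via lintegrals of bounded continuous ℝ≥0-valued functions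
  refine ext_of_forall_lintegral_eq_of_IsFiniteMeasure fun f => ?_
  set g : ↑X → ℝ := fun x => (f x : ℝ) with hg
  have hgc : Continuous g := NNReal.continuous_coe.comp f.continuous
  obtain ⟨h, hh, hnh, heq⟩ := hPoisson g hgc.continuousOn
  have hint : ∀ (m : Measure ↑X), IsProbabilityMeasure m → Integrable h m := fun m _ =>
    hh.1.integrable_of_hasCompactSupport (HasCompactSupport.of_compactSpace h)
  have hcongr : ∀ (m : Measure ↑X), m (closure (choquet J))ᶜ = 0 →
      ∫ x, g x ∂m = ∫ x, h x ∂m := by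
    intro m hm0
    refine integral_congr_ae ?_
    refine measure_mono_null ?_ hm0
    intro x hx
    simp only [Set.mem_compl_iff]
    intro hxB
    exact hx (heq hxB).symm
  have key : ∫ x, g x ∂μ = ∫ x, g x ∂ν := by
    rw [hcongr μ (hnull μ hμs), hcongr ν (hnull ν hνs),
      hmean h hh hnh μ hμ inferInstance, hmean h hh hnh ν hν inferInstance]
  have hgint : ∀ (m : Measure ↑X) [IsProbabilityMeasure m], Integrable g m := fun m _ =>
    hgc.integrable_of_hasCompactSupport (HasCompactSupport.of_compactSpace g)
  rw [lintegral_coe_eq_integral f (hgint μ), lintegral_coe_eq_integral f (hgint ν), key]
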